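/- Let σ be a relational vocabulary, 𝒜 a finite σ-structure, and k ≥ 1. There is a bijective correspondence between E_k-coalgebras α : 𝒜 → E_k 𝒜 and forest covers of the Gaifman graph 𝒢(𝒜) with universe A of height at most k: each coalgebra α induces the forest cover with order a ≤ a' iff α(a) is a prefix of α(a'), and each forest cover (A,≤) of height ≤ k induces the coalgebra sending a to the covering chain of predecessors of a; these assignments are mutually inverse. -/

import Mathlib

/-- A relational vocabulary: a type of relation symbols with arities. -/
structure RelVocab : Type 1 where
  Rel : Type
  ar : Rel → ℕ

/-- A structure for a relational vocabulary. -/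
structure RelStruct (σ : RelVocab) : Type 1 where
  carrier : Type
  rel : ∀ R : σ.Rel, (Fin (σ.ar R) → carrier) → Prop

/-- Homomorphisms of relational structures. -/
def IsHom {σ : RelVocab} (𝒜 ℬ : RelStruct σ) (h : 𝒜.carrier → ℬ.carrier) : Prop :=
  ∀ (R : σ.Rel) (v : Fin (σ.ar R) → 𝒜.carrier), 𝒜.rel R v → ℬ.rel R (fun i => h (v i))

/-- Nonempty sequences over `A` of length at most `k`: the universe of `E_k 𝒜`. -/
def EkC (k : ℕ) (A : Type) : Type :=
  {l : List A // l ≠ [] ∧ l.length ≤ k}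

/-- The counit: the last element of a sequence. -/
def eps {k : ℕ} {A : Type} (s : EkC k A) : A :=
  s.1.getLast s.2.1

/-- Comparability in the prefix order. -/
def Cmp {A : Type} (s t : List A) : Prop :=
  s <+: t ∨ t <+: s

/-- The Ehrenfeucht–Fraïssé comonad `E_k` on structures. -/
def Ek {σ : RelVocab} (k : ℕ) (𝒜 : RelStruct σ) : RelStruct σ where
  carrier := EkC k 𝒜.carrier
  rel R v := (∀ i j, Cmp (v i).1 (v j).1) ∧ 𝒜.rel R (fun i => eps (v i))

/-- The prefix of `s` of length `i+1`. -/
def prefAt {k : ℕ} {A : Type} (s : EkC k A) (i : Fin s.1.length) : EkC k A :=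
  ⟨s.1.take (i + 1), by
    constructor
    · apply List.ne_nil_of_length_pos
      rw [List.length_take]
      exact lt_min (Nat.succ_pos _) (Nat.lt_of_le_of_lt (Nat.zero_le _) i.2)
    · rw [List.length_take]
      exact le_trans (min_le_right _ _) s.2.2⟩

/-- The Kleisli coextension `f* [a_1,…,a_j] = [f[a_1],…,f[a_1,…,a_j]]`. -/
def coext {k : ℕ} {A B : Type} (f : EkC k A → B) (s : EkC k A) : EkC k B :=
  ⟨List.ofFn (fun i : Fin s.1.length => f (prefAt s i)), by
    constructor
    · apply List.ne_nil_of_length_pos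
      rw [List.length_ofFn]
      exact List.length_pos_iff.mpr s.2.1
    · rw [List.length_ofFn]
      exact s.2.2⟩

/-- The adjacency relation of the Gaifman graph of `𝒜`. -/
def gaif {σ : RelVocab} (𝒜 : RelStruct σ) (a a' : 𝒜.carrier) : Prop :=
  a ≠ a' ∧ ∃ (R : σ.Rel) (v : Fin (σ.ar R) → 𝒜.carrier),
    𝒜.rel R v ∧ (∃ i, v i = a) ∧ (∃ j, v j = a')

/-- A forest cover, with universe `V`, of the graph `(V, adj)`, of height at most `k`:
a partial order on `V` whose predecessor sets are finite chains, in which adjacent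
vertices are comparable, and in which every chain has at most `k` elements. -/
structure ForestCoverOn (V : Type) (adj : V → V → Prop) (k : ℕ) where
  le : V → V → Prop
  refl : ∀ a, le a a
  antisymm : ∀ a b, le a b → le b a → a = b
  trans : ∀ a b c, le a b → le b c → le a c
  pred_finite : ∀ a, {b | le b a}.Finite
  pred_chain : ∀ a, IsChain le {b | le b a}
  cover : ∀ a a', adj a a' → le a a' ∨ le a' a
  height : ∀ C : Finset V, IsChain le ↑C → C.card ≤ k

/-- An `E_k`-coalgebra on `𝒜`: a homomorphism `α : 𝒜 → E_k 𝒜` such that, writing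
`α(a) = [a_1,…,a_j]`, one has `a_j = a` and `α(a_i) = [a_1,…,a_i]` for `1 ≤ i ≤ j`. -/
structure EkCoalgebra {σ : RelVocab} (𝒜 : RelStruct σ) (k : ℕ) where
  α : 𝒜.carrier → EkC k 𝒜.carrier
  hom : IsHom 𝒜 (Ek k 𝒜) α
  counit : ∀ a, eps (α a) = a
  comult : ∀ (a : 𝒜.carrier) (i : Fin (α a).1.length),
    (α ((α a).1.get i)).1 = (α a).1.take (i + 1)

section AuxFC

variable {V : Type} {adj : V → V → Prop} {k : ℕ}

/-- The strict order associated to a forest cover. -/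
def fcr (fc : ForestCoverOn V adj k) (x y : V) : Prop := fc.le x y ∧ x ≠ y

theorem ForestCoverOn.ext' {fc fd : ForestCoverOn V adj k} (h : fc.le = fd.le) : fc = fd := by
  cases fc; cases fd; cases h; rfl

theorem fc_pairwise_eq (fc : ForestCoverOn V adj k) {l1 l2 : List V}
    (h1 : l1.Pairwise (fcr fc)) (h2 : l2.Pairwise (fcr fc))
    (hm : ∀ b, b ∈ l1 ↔ b ∈ l2) : l1 = l2 := by
  haveI : IsAntisymm V (fcr fc) := ⟨fun a b h h' => fc.antisymm a b h.1 h'.1⟩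
  have nd1 : l1.Nodup := h1.imp (fun h => h.2)
  have nd2 : l2.Nodup := h2.imp (fun h => h.2)
  exact List.Perm.eq_of_pairwise (fun a b _ _ h h' => fc.antisymm a b h.1 h'.1) h1 h2
    ((List.perm_ext_iff_of_nodup nd1 nd2).mpr hm)

theorem fc_le_getLast (fc : ForestCoverOn V adj k) (l : List V) :
    ∀ (hne : l ≠ []), l.Pairwise (fcr fc) → ∀ x ∈ l, fc.le x (l.getLast hne) := by
  induction l with
  | nil => intro h; exact absurd rfl h
  | cons a t ih =>
    intro hne hp x hx
    cases t with
    | nil =>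
      have hx' : x = a := by simpa using hx
      subst hx'
      simpa using fc.refl x
    | cons b t' =>
      rw [List.getLast_cons (by simp : b :: t' ≠ [])]
      rcases List.mem_cons.1 hx with rfl | hx'
      · exact ((List.pairwise_cons.1 hp).1 _ (List.getLast_mem _)).1
      · exact ih (by simp) (List.pairwise_cons.1 hp).2 x hx'

theorem fc_prefix_of_initial (fc : ForestCoverOn V adj k) (l2 : List V) :
    ∀ l1 : List V, l1.Pairwise (fcr fc) → l2.Pairwise (fcr fc) →
    (∀ b ∈ l1, b ∈ l2) → (∀ x ∈ l2, ∀ w ∈ l1, fc.le x w → x ∈ l1) → l1 <+: l2 := by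
  induction l2 with
  | nil =>
    intro l1 _ _ hsub _
    cases l1 with
    | nil => exact List.prefix_refl _
    | cons x t => exact absurd (hsub x List.mem_cons_self) List.not_mem_nil
  | cons y t2 ih =>
    intro l1 h1 h2 hsub hdc
    cases l1 with
    | nil => exact List.nil_prefix
    | cons x t1 =>
      have hxy : x = y := by
        by_contra hne
        have hxt2 : x ∈ t2 := by
          rcases List.mem_cons.1 (hsub x List.mem_cons_self) with h | h
          · exact absurd h hne
          · exact h
        have hyx : fc.le y x := ((List.pairwise_cons.1 h2).1 x hxt2).1
        have hy1 : y ∈ x :: t1 :=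
          hdc y List.mem_cons_self x List.mem_cons_self hyx
        rcases List.mem_cons.1 hy1 with h | h
        · exact hne h.symm
        · exact hne (fc.antisymm x y ((List.pairwise_cons.1 h1).1 y h).1 hyx)
      subst hxy
      have htail : t1 <+: t2 := by
        apply ih t1 (List.pairwise_cons.1 h1).2 (List.pairwise_cons.1 h2).2
        · intro b hb
          rcases List.mem_cons.1 (hsub b (List.mem_cons_of_mem x hb)) with h | h
          · exact absurd h.symm ((List.pairwise_cons.1 h1).1 b hb).2
          · exact h
        · intro z hz w hw hzw
          have : z ∈ x :: t1 :=
            hdc z (List.mem_cons_of_mem x hz) w (List.mem_cons_of_mem x hw) hzw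
          rcases List.mem_cons.1 this with h | h
          · exact absurd h.symm ((List.pairwise_cons.1 h2).1 z hz).2
          · exact h
      exact (List.prefix_cons_inj x).mpr htail

theorem exists_predList (fc : ForestCoverOn V adj k) (a : V) :
    ∃ l : List V, (∀ b, b ∈ l ↔ fc.le b a) ∧ l.Pairwise (fcr fc) := by
  classical
  letI : Fintype {b // fc.le b a} := (fc.pred_finite a).fintype
  letI pord : PartialOrder {b // fc.le b a} :=
    { le := fun x y => fc.le x y
      le_refl := fun x => fc.refl x
      le_trans := fun x y z h1 h2 => fc.trans x y z h1 h2
      le_antisymm := fun x y h1 h2 => Subtype.ext (fc.antisymm x y h1 h2) }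
  letI lord : LinearOrder {b // fc.le b a} :=
    { pord with
      le_total := fun x y => by
        rcases eq_or_ne (x : V) (y : V) with h | h
        · exact Or.inl (le_of_eq (Subtype.ext h))
        · exact fc.pred_chain a x.2 y.2 h
      toDecidableLE := Classical.decRel _ }
  refine ⟨(Finset.sort (Finset.univ : Finset {b // fc.le b a}) (· ≤ ·)).map Subtype.val, ?_, ?_⟩
  · intro b
    simp only [List.mem_map, Finset.mem_sort, Finset.mem_univ, true_and]
    constructor
    · rintro ⟨x, _, rfl⟩; exact x.2
    · intro hb; exact ⟨⟨b, hb⟩, rfl⟩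
  · rw [List.pairwise_map]
    have hs := Finset.pairwise_sort (α := {b // fc.le b a}) (s := Finset.univ) (r := (· ≤ ·))
    have hn := Finset.sort_nodup (α := {b // fc.le b a}) (s := Finset.univ) (r := (· ≤ ·))
    exact (List.Pairwise.and hs hn).imp
      (fun h => ⟨h.1, fun he => h.2 (Subtype.ext he)⟩)

/-- The list of predecessors of `a`, in increasing order. -/
noncomputable def predList (fc : ForestCoverOn V adj k) (a : V) : List V :=
  (exists_predList fc a).choose

theorem predList_mem (fc : ForestCoverOn V adj k) (a b : V) :
    b ∈ predList fc a ↔ fc.le b a :=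
  (exists_predList fc a).choose_spec.1 b

theorem predList_pairwise (fc : ForestCoverOn V adj k) (a : V) :
    (predList fc a).Pairwise (fcr fc) :=
  (exists_predList fc a).choose_spec.2

theorem predList_ne_nil (fc : ForestCoverOn V adj k) (a : V) : predList fc a ≠ [] := by
  intro h
  have := (predList_mem fc a a).2 (fc.refl a)
  rw [h] at this
  exact List.not_mem_nil this

theorem predList_length_le (fc : ForestCoverOn V adj k) (a : V) :
    (predList fc a).length ≤ k := by
  classical
  have hnd : (predList fc a).Nodup := (predList_pairwise fc a).imp (fun h => h.2)
  rw [← List.toFinset_card_of_nodup hnd]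
  apply fc.height
  intro x hx y hy hne
  exact fc.pred_chain a
    ((predList_mem fc a x).1 (List.mem_toFinset.1 hx))
    ((predList_mem fc a y).1 (List.mem_toFinset.1 hy)) hne

theorem predList_getLast (fc : ForestCoverOn V adj k) (a : V)
    (h : predList fc a ≠ []) : (predList fc a).getLast h = a :=
  fc.antisymm _ _
    ((predList_mem fc a _).1 (List.getLast_mem h))
    (fc_le_getLast fc _ h (predList_pairwise fc a) a ((predList_mem fc a a).2 (fc.refl a)))

theorem predList_prefix (fc : ForestCoverOn V adj k) {a a' : V} (h : fc.le a a') :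
    predList fc a <+: predList fc a' := by
  apply fc_prefix_of_initial fc _ _ (predList_pairwise fc a) (predList_pairwise fc a')
  · intro b hb
    exact (predList_mem fc a' b).2 (fc.trans _ _ _ ((predList_mem fc a b).1 hb) h)
  · intro x hx w hw hxw
    exact (predList_mem fc a x).2 (fc.trans _ _ _ hxw ((predList_mem fc a w).1 hw))

end AuxFC

section AuxCoalg

variable {σ : RelVocab} {𝒜 : RelStruct σ} {k : ℕ}

theorem EkCoalgebra.ext' {c d : EkCoalgebra 𝒜 k} (h : c.α = d.α) : c = d := by
  cases c; cases d; cases h; rfl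

theorem mem_alpha (c : EkCoalgebra 𝒜 k) (a b : 𝒜.carrier) :
    b ∈ (c.α a).1 ↔ (c.α b).1 <+: (c.α a).1 := by
  constructor
  · intro hb
    obtain ⟨i, hi⟩ := List.mem_iff_get.1 hb
    subst hi
    rw [c.comult a i]
    exact List.take_prefix _ _
  · intro h
    have hb : eps (c.α b) ∈ (c.α b).1 := List.getLast_mem _
    rw [c.counit b] at hb
    exact h.sublist.subset hb

theorem alpha_inj (c : EkCoalgebra 𝒜 k) {a b : 𝒜.carrier} (h : (c.α a).1 = (c.α b).1) :
    a = b := by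
  have hab : c.α a = c.α b := Subtype.ext h
  rw [← c.counit a, ← c.counit b, hab]

theorem alpha_pairwise (c : EkCoalgebra 𝒜 k) (a : 𝒜.carrier) :
    ((c.α a).1).Pairwise (fun x y => (c.α x).1 <+: (c.α y).1 ∧ x ≠ y) := by
  rw [List.pairwise_iff_get]
  intro i j hij
  have hi := c.comult a i
  have hj := c.comult a j
  constructor
  · rw [hi, hj]
    have : (i : ℕ) + 1 ≤ (j : ℕ) + 1 := Nat.succ_le_succ (le_of_lt hij)
    calc (c.α a).1.take ((i : ℕ) + 1)
        = ((c.α a).1.take ((j : ℕ) + 1)).take ((i : ℕ) + 1) := by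
          rw [List.take_take, min_eq_left this]
      _ <+: (c.α a).1.take ((j : ℕ) + 1) := List.take_prefix _ _
  · intro he
    have : (c.α a).1.take ((i : ℕ) + 1) = (c.α a).1.take ((j : ℕ) + 1) := by
      rw [← hi, ← hj, he]
    have hlen := congrArg List.length this
    rw [List.length_take, List.length_take,
      min_eq_left (Nat.succ_le_of_lt i.2), min_eq_left (Nat.succ_le_of_lt j.2)] at hlen
    exact absurd (Fin.ext (Nat.succ_injective hlen)) (ne_of_lt hij)

end AuxCoalg

section Constructions

variable {σ : RelVocab} {𝒜 : RelStruct σ} {k : ℕ}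

/-- From a coalgebra to a forest cover. -/
def FDef (hfin : Finite 𝒜.carrier) (hk : 1 ≤ k) (c : EkCoalgebra 𝒜 k) :
    ForestCoverOn 𝒜.carrier (gaif 𝒜) k where
  le a a' := (c.α a).1 <+: (c.α a').1
  refl a := List.prefix_refl _
  antisymm a b h1 h2 := alpha_inj c (h1.sublist.antisymm h2.sublist)
  trans a b d h1 h2 := h1.trans h2
  pred_finite a := @Set.toFinite _ _ (@Subtype.finite _ hfin _)
  pred_chain a := fun x hx y hy _ => List.prefix_or_prefix_of_prefix hx hy
  cover a a' hadj := by
    obtain ⟨hne, R, v, hv, ⟨i, hi⟩, ⟨j, hj⟩⟩ := hadj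
    have h := (c.hom R v hv).1 i j
    subst hi; subst hj
    exact h
  height C hC := by
    classical
    have hmap : ∀ a ∈ C, (c.α a).1.length - 1 ∈ Finset.range k := by
      intro a _
      rw [Finset.mem_range]
      have h1 : 1 ≤ (c.α a).1.length := List.length_pos_iff.2 (c.α a).2.1
      have h2 : (c.α a).1.length ≤ k := (c.α a).2.2
      omega
    have hinj : Set.InjOn (fun a => (c.α a).1.length - 1) ↑C := by
      intro x hx y hy hxy
      by_contra hne
      have h1 : 1 ≤ (c.α x).1.length := List.length_pos_iff.2 (c.α x).2.1
      have h2 : 1 ≤ (c.α y).1.length := List.length_pos_iff.2 (c.α y).2.1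
      have hlen : (c.α x).1.length = (c.α y).1.length := by
        simp only at hxy; omega
      rcases hC hx hy hne with h | h
      · exact hne (alpha_inj c (h.eq_of_length hlen))
      · exact hne (alpha_inj c (h.eq_of_length hlen.symm)).symm
    calc C.card ≤ (Finset.range k).card := Finset.card_le_card_of_injOn _ hmap hinj
      _ = k := Finset.card_range k

/-- From a forest cover to a coalgebra. -/
noncomputable def GDef (hk : 1 ≤ k) (fc : ForestCoverOn 𝒜.carrier (gaif 𝒜) k) :
    EkCoalgebra 𝒜 k where
  α a := ⟨predList fc a, predList_ne_nil fc a, predList_length_le fc a⟩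
  hom R v hv := by
    refine ⟨fun i j => ?_, ?_⟩
    · show Cmp (predList fc (v i)) (predList fc (v j))
      rcases eq_or_ne (v i) (v j) with he | hne
      · rw [he]; exact Or.inl (List.prefix_refl _)
      · have hadj : gaif 𝒜 (v i) (v j) := ⟨hne, R, v, hv, ⟨i, rfl⟩, ⟨j, rfl⟩⟩
        rcases fc.cover _ _ hadj with h | h
        · exact Or.inl (predList_prefix fc h)
        · exact Or.inr (predList_prefix fc h)
    · have he : (fun i => eps (⟨predList fc (v i), predList_ne_nil fc (v i),
          predList_length_le fc (v i)⟩ : EkC k 𝒜.carrier)) = v := by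
        funext i
        exact predList_getLast fc (v i) _
      show 𝒜.rel R _
      rw [he]
      exact hv
  counit a := predList_getLast fc a _
  comult a i := by
    show predList fc ((predList fc a).get i) = (predList fc a).take ((i : ℕ) + 1)
    have hgi : fc.le ((predList fc a).get i) a :=
      (predList_mem fc a _).1 (List.get_mem _ i)
    apply fc_pairwise_eq fc (predList_pairwise fc _)
      (List.Pairwise.sublist (List.take_sublist _ _) (predList_pairwise fc a))
    intro b
    rw [predList_mem]
    constructor
    · intro hb
      have hba : fc.le b a := fc.trans _ _ _ hb hgi
      obtain ⟨n, hn⟩ := List.mem_iff_get.1 ((predList_mem fc a b).2 hba)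
      rcases lt_or_ge (i : ℕ) (n : ℕ) with h | h
      · exfalso
        have hr := List.pairwise_iff_get.1 (predList_pairwise fc a) i n h
        have : (predList fc a).get i = b := fc.antisymm _ _ (hn ▸ hr.1) hb
        exact hr.2 (this.trans hn.symm)
      · rw [← hn]
        apply List.mem_iff_getElem.2
        refine ⟨(n : ℕ), ?_, ?_⟩
        · rw [List.length_take]
          exact lt_min (Nat.lt_succ_of_le h) n.2
        · rw [List.getElem_take]
          simp [List.get_eq_getElem]
    · intro hb
      obtain ⟨m, hm, hmb⟩ := List.mem_iff_getElem.1 hb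
      rw [List.length_take] at hm
      have hm1 : m < (i : ℕ) + 1 := lt_of_lt_of_le hm (min_le_left _ _)
      have hm2 : m < (predList fc a).length := lt_of_lt_of_le hm (min_le_right _ _)
      rw [List.getElem_take] at hmb
      rcases Nat.lt_or_ge m (i : ℕ) with h | h
      · have hr := List.pairwise_iff_get.1 (predList_pairwise fc a) ⟨m, hm2⟩ i h
        rw [← hmb]
        exact hr.1
      · have : m = (i : ℕ) := by omega
        subst this
        rw [← hmb]
        simpa [List.get_eq_getElem] using fc.refl ((predList fc a).get i)

end Constructions

/-- Bijective correspondence between `E_k`-coalgebras on `𝒜` and forest covers of the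
Gaifman graph of `𝒜` of height at most `k`: the coalgebra `α` induces the forest cover
`a ≤ a' iff α(a) ⊑ α(a')`; a forest cover induces the coalgebra sending `a` to the
chain of its predecessors; and these assignments are mutually inverse. -/
theorem stmt9 (σ : RelVocab) (𝒜 : RelStruct σ) (hfin : Finite 𝒜.carrier)
    (k : ℕ) (hk : 1 ≤ k) :
    ∃ (F : EkCoalgebra 𝒜 k → ForestCoverOn 𝒜.carrier (gaif 𝒜) k)
      (G : ForestCoverOn 𝒜.carrier (gaif 𝒜) k → EkCoalgebra 𝒜 k),
      (∀ c a a', (F c).le a a' ↔ (c.α a).1 <+: (c.α a').1) ∧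
      (∀ fc a, (∀ b, b ∈ ((G fc).α a).1 ↔ fc.le b a) ∧
        ((G fc).α a).1.Pairwise (fun x y => fc.le x y ∧ x ≠ y)) ∧
      (∀ c, G (F c) = c) ∧ (∀ fc, F (G fc) = fc) := by
  classical
  refine ⟨FDef hfin hk, GDef hk, fun c a a' => Iff.rfl, ?_, ?_, ?_⟩
  · intro fc a
    exact ⟨fun b => predList_mem fc a b, predList_pairwise fc a⟩
  · intro c
    apply EkCoalgebra.ext'
    funext a
    apply Subtype.ext
    show predList (FDef hfin hk c) a = (c.α a).1
    apply fc_pairwise_eq (FDef hfin hk c) (predList_pairwise _ a) (alpha_pairwise c a)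
    intro b
    rw [predList_mem, mem_alpha]
    exact Iff.rfl
  · intro fc
    apply ForestCoverOn.ext'
    funext a a'
    show ((predList fc a <+: predList fc a') = fc.le a a')
    apply propext
    constructor
    · intro h
      exact (predList_mem fc a' a).1
        (h.sublist.subset ((predList_mem fc a a).2 (fc.refl a)))
    · exact predList_prefix fc
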